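/- arXiv:0809.2166 — 2 statements merged into one kernel-verified Lean document; each statement's English description precedes it below -/
import Mathlib

section
/- Let q = p^d be a prime power and let G be a finite abelian p-group of exponent dividing q. For every symmetric 2-cocycle c : G × G → ℤ/q (i.e. a 2-cocycle with c(σ,τ) = c(τ,σ) for all σ, τ), there exist a group homomorphism ψ : G → ℤ/q, a function ψ̂ : G → ℤ/q² with π ∘ ψ̂ = ψ, and a function f : G → ℤ/q such that c(σ,τ) = χ_{ψ,ψ̂}(σ,τ) + f(σ) + f(τ) − f(στ) for all σ, τ ∈ G. (In cohomological terms: the Bockstein homomorphism β_G maps H¹(G, ℤ/q) onto the subgroup H²(G, ℤ/q)_sym of classes of symmetric 2-cocycles.) -/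
/-- The reduction homomorphism `π : ℤ/q² → ℤ/q`. -/
noncomputable def piHom (q : ℕ) : ZMod (q ^ 2) →+* ZMod q :=
  ZMod.castHom (dvd_pow_self q (by norm_num : (2 : ℕ) ≠ 0)) (ZMod q)

/-- The injective additive map `ι : ℤ/q → ℤ/q²`, `x mod q ↦ qx mod q²`. -/
def iotaMap (q : ℕ) (x : ZMod q) : ZMod (q ^ 2) := (q : ZMod (q ^ 2)) * x.val

lemma iotaMap_add (q : ℕ) [NeZero q] (a b : ZMod q) :
    iotaMap q (a + b) = iotaMap q a + iotaMap q b := by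
  unfold iotaMap
  rw [← mul_add, ← Nat.cast_add, ZMod.val_add]
  set s : ℕ := a.val + b.val with hs
  have h2 : (s % q : ℕ) + q * (s / q) = s := Nat.mod_add_div _ _
  have h3 : (q : ZMod (q ^ 2)) * (q : ZMod (q ^ 2)) = 0 := by
    rw [← Nat.cast_mul, ← pow_two, ZMod.natCast_self]
  have h4 := congrArg (Nat.cast : ℕ → ZMod (q ^ 2)) h2
  push_cast at h4
  linear_combination ((q : ZMod (q ^ 2))) * h4 + (-((s / q : ℕ) : ZMod (q ^ 2))) * h3

lemma piHom_iotaMap (q : ℕ) (z : ZMod q) : piHom q (iotaMap q z) = 0 := by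
  unfold piHom iotaMap
  rw [map_mul, map_natCast, ZMod.natCast_self, zero_mul]

lemma zmod_exists_smul_eq {n m : ℕ} [NeZero n] (hm : m ∣ n) (z : ZMod n)
    (hz : ((n / m : ℕ) : ℤ) • z = 0) : ∃ y : ZMod n, (m : ℤ) • y = z := by
  have hn : n ≠ 0 := NeZero.ne n
  have hm0 : 0 < m := Nat.pos_of_ne_zero (by rintro rfl; exact hn (Nat.eq_zero_of_zero_dvd hm))
  have hq0 : 0 < n / m := Nat.div_pos (Nat.le_of_dvd (Nat.pos_of_ne_zero hn) hm) hm0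
  have hz' : ((n / m : ℕ) : ZMod n) * z = 0 := by
    rw [zsmul_eq_mul, Int.cast_natCast] at hz
    exact hz
  have h1 : (((n / m) * z.val : ℕ) : ZMod n) = 0 := by
    rw [Nat.cast_mul, ZMod.natCast_zmod_val]
    exact hz'
  have h2 : n ∣ (n / m) * z.val := (ZMod.natCast_eq_zero_iff _ _).mp h1
  have h3 : m ∣ z.val := by
    obtain ⟨t, ht⟩ := h2
    have h4 : (n / m) * z.val = (n / m) * (m * t) := by
      rw [ht, ← mul_assoc, Nat.div_mul_cancel hm]
    exact ⟨t, Nat.eq_of_mul_eq_mul_left hq0 h4⟩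
  obtain ⟨t, ht⟩ := h3
  refine ⟨(t : ZMod n), ?_⟩
  calc (m : ℤ) • ((t : ℕ) : ZMod n) = ((m * t : ℕ) : ZMod n) := by
        rw [zsmul_eq_mul]; push_cast; ring
    _ = z := by rw [← ht, ZMod.natCast_zmod_val]

lemma baer_step {E : Type*} [AddCommGroup E] (n : ℕ) [NeZero n]
    (hexp : ∀ v : E, (n : ℤ) • v = 0) (A : AddSubgroup E) (f : A →+ ZMod n) (x : E) :
    ∃ (B : AddSubgroup E) (g : B →+ ZMod n), A ≤ B ∧ x ∈ B ∧
      ∀ (a : E) (ha : a ∈ A) (hb : a ∈ B), g ⟨a, hb⟩ = f ⟨a, ha⟩ := by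
  classical
  set S : AddSubgroup ℤ := AddSubgroup.comap ((zmultiplesHom E) x) A with hS
  have hmemS : ∀ k : ℤ, k ∈ S ↔ k • x ∈ A := fun k => Iff.rfl
  obtain ⟨gen, hgen⟩ := Int.subgroup_cyclic S
  have hgenS : ∀ k : ℤ, k ∈ S ↔ gen ∣ k := by
    intro k
    rw [hgen, ← AddSubgroup.zmultiples_eq_closure, Int.mem_zmultiples_iff]
  have hnS : (n : ℤ) ∈ S := by
    rw [hmemS, hexp x]; exact A.zero_mem
  set m : ℕ := gen.natAbs with hm
  have hmS : (m : ℤ) ∈ S := by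
    rw [hgenS]; exact Int.dvd_natAbs.mpr dvd_rfl
  have hmdvd : m ∣ n := by
    have h := (hgenS _).mp hnS
    exact Int.ofNat_dvd.mp (by rwa [Int.natAbs_dvd])
  have hmx : (m : ℤ) • x ∈ A := (hmemS _).mp hmS
  have hz : ((n / m : ℕ) : ℤ) • (f ⟨(m : ℤ) • x, hmx⟩) = 0 := by
    rw [← map_zsmul]
    have h5 : ((n / m : ℕ) : ℤ) • (⟨(m : ℤ) • x, hmx⟩ : A) = 0 := by
      apply Subtype.ext
      show ((n / m : ℕ) : ℤ) • ((m : ℤ) • x) = (0 : E)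
      rw [smul_smul]
      have h6 : ((n / m : ℕ) : ℤ) * (m : ℤ) = (n : ℤ) := by
        rw [← Nat.cast_mul, Nat.div_mul_cancel hmdvd]
      rw [h6, hexp]
    rw [h5, map_zero]
  obtain ⟨y, hy⟩ := zmod_exists_smul_eq hmdvd _ hz
  have wd : ∀ (a a' : A) (k k' : ℤ), (a : E) + k • x = (a' : E) + k' • x →
      f a + k • y = f a' + k' • y := by
    intro a a' k k' h
    have h2 : (k' - k) • x = (a : E) - (a' : E) := by
      rw [sub_smul, sub_eq_sub_iff_add_eq_add, add_comm ((k' : ℤ) • x) ((a' : A) : E)]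
      exact h.symm
    have hmem : (k' - k) • x ∈ A := by rw [h2]; exact A.sub_mem a.2 a'.2
    have hdvd : (m : ℤ) ∣ (k' - k) := Int.natAbs_dvd.mpr ((hgenS _).mp hmem)
    obtain ⟨t, ht⟩ := hdvd
    have key : a - a' = t • (⟨(m : ℤ) • x, hmx⟩ : A) := by
      apply Subtype.ext
      push_cast
      rw [← h2, ht, smul_smul, mul_comm]
    have h7 : f a - f a' = (k' - k) • y := by
      rw [← map_sub, key, map_zsmul, ← hy, smul_smul, mul_comm t ((m : ℕ) : ℤ), ← ht]
    rw [sub_smul] at h7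
    have := sub_eq_sub_iff_add_eq_add.mp h7
    rw [add_comm ((k' : ℤ) • y) (f a')] at this
    exact this
  set B := A ⊔ AddSubgroup.zmultiples x with hB
  have hxB : x ∈ B := SetLike.le_def.mp le_sup_right (AddSubgroup.mem_zmultiples x)
  have hrep : ∀ b : B, ∃ (a : A) (k : ℤ), (a : E) + k • x = (b : E) := by
    intro b
    have hb : (b : E) ∈ A ⊔ AddSubgroup.zmultiples x := b.2
    rw [AddSubgroup.mem_sup] at hb
    obtain ⟨u, hu, v, hv, huv⟩ := hb
    rw [AddSubgroup.mem_zmultiples_iff] at hv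
    obtain ⟨k, hk⟩ := hv
    exact ⟨⟨u, hu⟩, k, by rw [hk]; exact huv⟩
  choose ra rk hra using hrep
  have gadd : ∀ b b' : B, (fun b => f (ra b) + (rk b) • y) (b + b')
      = (fun b => f (ra b) + (rk b) • y) b + (fun b => f (ra b) + (rk b) • y) b' := by
    intro b b'
    have h1 : ((ra b + ra b' : A) : E) + (rk b + rk b') • x = ((b + b' : B) : E) := by
      push_cast
      rw [← hra b, ← hra b', add_smul]; abel
    have h8 := wd (ra (b + b')) (ra b + ra b') (rk (b + b')) (rk b + rk b')
      (by rw [hra (b + b')]; exact h1.symm)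
    show f (ra (b + b')) + (rk (b + b')) • y = _
    rw [h8, map_add, add_smul]; beta_reduce; abel
  refine ⟨B, AddMonoidHom.mk' (fun b => f (ra b) + (rk b) • y) gadd, le_sup_left, hxB, ?_⟩
  intro a ha hb
  have h9 := wd (ra ⟨a, hb⟩) ⟨a, ha⟩ (rk ⟨a, hb⟩) 0 (by rw [hra ⟨a, hb⟩]; simp)
  simpa using h9

lemma baer_extend {E : Type*} [AddCommGroup E] [Finite E] (n : ℕ) [NeZero n]
    (hexp : ∀ v : E, (n : ℤ) • v = 0) (A : AddSubgroup E) (f : A →+ ZMod n) :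
    ∃ F : E →+ ZMod n, ∀ a : A, F (a : E) = f a := by
  classical
  suffices h : ∀ (d0 : ℕ) (A : AddSubgroup E) (f : A →+ ZMod n),
      Nat.card E - Nat.card A ≤ d0 → ∃ F : E →+ ZMod n, ∀ a : A, F (a : E) = f a by
    exact h _ A f le_rfl
  intro d0
  induction d0 with
  | zero =>
    intro A f hcard
    have h1 : Nat.card A ≤ Nat.card E := Nat.card_le_card_of_injective _ Subtype.val_injective
    have hA : A = ⊤ := AddSubgroup.eq_top_of_card_eq _ (by omega)
    subst hA
    refine ⟨f.comp (AddSubgroup.topEquiv.symm : E ≃+ (⊤ : AddSubgroup E)).toAddMonoidHom, ?_⟩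
    intro a
    exact congrArg f (Subtype.ext rfl)
  | succ d0 ih =>
    intro A f hcard
    by_cases hA : A = ⊤
    · subst hA
      refine ⟨f.comp (AddSubgroup.topEquiv.symm : E ≃+ (⊤ : AddSubgroup E)).toAddMonoidHom, ?_⟩
      intro a
      exact congrArg f (Subtype.ext rfl)
    · obtain ⟨x, hx⟩ : ∃ x : E, x ∉ A := by
        by_contra h
        push_neg at h
        exact hA (AddSubgroup.eq_top_iff' A |>.mpr h)
      obtain ⟨B, g, hAB, hxB, hcompat⟩ := baer_step n hexp A f x
      have hlt : Nat.card A < Nat.card B := by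
        have hs : (A : Set E) ⊂ (B : Set E) := ⟨hAB, fun h => hx (h hxB)⟩
        have h10 := Set.ncard_lt_ncard hs (Set.toFinite _)
        rw [← Nat.card_coe_set_eq, ← Nat.card_coe_set_eq] at h10; exact h10
      obtain ⟨F, hF⟩ := ih B g (by omega)
      refine ⟨F, fun a => ?_⟩
      have h11 := hF ⟨(a : E), hAB a.2⟩
      rw [h11, hcompat (a : E) a.2 (hAB a.2)]

/-- The abelian group structure on `ZMod q × G` induced by a normalized symmetric
2-cocycle `c`. -/
def cocycleAddCommGroup {q : ℕ} {G : Type*} [CommGroup G] (c : G → G → ZMod q)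
    (hcoc : ∀ σ τ ρ : G, c σ τ + c (σ * τ) ρ = c τ ρ + c σ (τ * ρ))
    (hsym : ∀ σ τ : G, c σ τ = c τ σ)
    (hone : ∀ τ : G, c 1 τ = 0) : AddCommGroup (ZMod q × G) where
  add x y := (x.1 + y.1 + c x.2 y.2, x.2 * y.2)
  zero := ((0 : ZMod q), (1 : G))
  neg x := (-x.1 - c x.2 x.2⁻¹, x.2⁻¹)
  nsmul := @nsmulRec _ ⟨((0 : ZMod q), (1 : G))⟩
    ⟨fun x y => (x.1 + y.1 + c x.2 y.2, x.2 * y.2)⟩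
  zsmul := @zsmulRec _ ⟨((0 : ZMod q), (1 : G))⟩
    ⟨fun x y => (x.1 + y.1 + c x.2 y.2, x.2 * y.2)⟩
    ⟨fun x => (-x.1 - c x.2 x.2⁻¹, x.2⁻¹)⟩
    (@nsmulRec _ ⟨((0 : ZMod q), (1 : G))⟩
      ⟨fun x y => (x.1 + y.1 + c x.2 y.2, x.2 * y.2)⟩)
  add_assoc x y z := by
    refine Prod.ext ?_ ?_
    · show x.1 + y.1 + c x.2 y.2 + z.1 + c (x.2 * y.2) z.2
        = x.1 + (y.1 + z.1 + c y.2 z.2) + c x.2 (y.2 * z.2)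
      linear_combination hcoc x.2 y.2 z.2
    · show x.2 * y.2 * z.2 = x.2 * (y.2 * z.2)
      exact mul_assoc _ _ _
  zero_add x := by
    refine Prod.ext ?_ ?_
    · show 0 + x.1 + c 1 x.2 = x.1
      rw [hone, zero_add, add_zero]
    · show 1 * x.2 = x.2
      exact one_mul _
  add_zero x := by
    refine Prod.ext ?_ ?_
    · show x.1 + 0 + c x.2 1 = x.1
      rw [hsym x.2 1, hone, add_zero, add_zero]
    · show x.2 * 1 = x.2
      exact mul_one _
  neg_add_cancel x := by
    refine Prod.ext ?_ ?_
    · show -x.1 - c x.2 x.2⁻¹ + x.1 + c x.2⁻¹ x.2 = 0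
      linear_combination hsym x.2⁻¹ x.2
    · show x.2⁻¹ * x.2 = 1
      exact inv_mul_cancel x.2
  add_comm x y := by
    refine Prod.ext ?_ ?_
    · show x.1 + y.1 + c x.2 y.2 = y.1 + x.1 + c y.2 x.2
      linear_combination hsym x.2 y.2
    · exact mul_comm _ _

/-- Let `q = p^d` be a prime power and `G` a finite abelian `p`-group of exponent dividing
`q`.  Every symmetric 2-cocycle `c : G × G → ℤ/q` is, modulo a 2-coboundary, a Bockstein
2-cocycle `χ_{ψ,ψ̂}` for some homomorphism `ψ : G → ℤ/q` with set-theoretic lift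
`ψ̂ : G → ℤ/q²`: the Bockstein `β_G` maps `H¹(G,ℤ/q)` onto `H²(G,ℤ/q)_sym`. -/
theorem bockstein_onto_symmetric_part (p d q : ℕ) (hp : p.Prime) (hd : 0 < d)
    (hq : q = p ^ d) (G : Type*) [CommGroup G] [Finite G] (hexp : ∀ g : G, g ^ q = 1)
    (c : G → G → ZMod q)
    (hcocycle : ∀ σ τ ρ : G, c σ τ + c (σ * τ) ρ = c τ ρ + c σ (τ * ρ))
    (hsymm : ∀ σ τ : G, c σ τ = c τ σ) :
    ∃ (ψ : G →* Multiplicative (ZMod q)) (ψhat : G → ZMod (q ^ 2))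
      (χ : G → G → ZMod q) (f : G → ZMod q),
      (∀ g : G, piHom q (ψhat g) = Multiplicative.toAdd (ψ g)) ∧
      (∀ σ τ : G, iotaMap q (χ σ τ) = ψhat σ + ψhat τ - ψhat (σ * τ)) ∧
      (∀ σ τ : G, c σ τ = χ σ τ + f σ + f τ - f (σ * τ)) := by
  classical
  have hq0 : q ≠ 0 := by
    rw [hq]; exact pow_ne_zero _ hp.pos.ne'
  haveI : NeZero q := ⟨hq0⟩
  haveI : NeZero (q ^ 2) := ⟨pow_ne_zero _ hq0⟩
  -- normalize the cocycle
  set k : ZMod q := c 1 1 with hk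
  set c' : G → G → ZMod q := fun σ τ => c σ τ - k with hc'
  have hcoc' : ∀ σ τ ρ : G, c' σ τ + c' (σ * τ) ρ = c' τ ρ + c' σ (τ * ρ) := by
    intro σ τ ρ
    simp only [hc']
    linear_combination hcocycle σ τ ρ
  have hsym' : ∀ σ τ : G, c' σ τ = c' τ σ := by
    intro σ τ
    simp only [hc']
    rw [hsymm σ τ]
  have honeL : ∀ τ : G, c 1 τ = k := by
    intro τ
    have h := hcocycle 1 1 τ
    rw [one_mul, one_mul] at h
    rw [hk]
    linear_combination -h
  have hone' : ∀ τ : G, c' 1 τ = 0 := by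
    intro τ
    simp only [hc']
    rw [honeL]
    ring
  -- the extension group
  letI inst : AddCommGroup (ZMod q × G) := cocycleAddCommGroup c' hcoc' hsym' hone'
  have hadd : ∀ x y : ZMod q × G, x + y = (x.1 + y.1 + c' x.2 y.2, x.2 * y.2) :=
    fun _ _ => rfl
  have hzero : (0 : ZMod q × G) = ((0 : ZMod q), (1 : G)) := rfl
  -- the embedding of ZMod q
  set e : ZMod q →+ ZMod q × G := AddMonoidHom.mk' (fun v => (v, 1)) (by
    intro v w
    rw [hadd]
    refine Prod.ext ?_ ?_
    · show v + w = v + w + c' 1 1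
      rw [hone', add_zero]
    · show (1 : G) = 1 * 1
      rw [mul_one]) with he
  have he_apply : ∀ v : ZMod q, e v = (v, 1) := fun _ => rfl
  -- exponent q^2
  have hsecond : ∀ (j : ℕ) (x : ZMod q × G), (j • x).2 = x.2 ^ j := by
    intro j x
    induction j with
    | zero => rw [zero_nsmul, pow_zero]; rfl
    | succ j ih => rw [succ_nsmul, hadd, pow_succ]; show (j • x).2 * x.2 = _; rw [ih]
  have hexpE : ∀ x : ZMod q × G, ((q ^ 2 : ℕ) : ℤ) • x = 0 := by
    intro x
    rw [natCast_zsmul, pow_two, mul_nsmul]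
    have h1 : (q • x).2 = 1 := by rw [hsecond]; exact hexp x.2
    have h2 : q • x = e ((q • x).1) := Prod.ext rfl h1
    rw [h2, ← map_nsmul]
    have h3 : q • ((q • x).1) = 0 := by
      rw [nsmul_eq_mul, ZMod.natCast_self, zero_mul]
    rw [h3, map_zero]
  -- the subgroup and the partial map
  set A : AddSubgroup (ZMod q × G) := e.range with hA
  have hmem_snd : ∀ a : ZMod q × G, a ∈ A → a.2 = 1 := by
    intro a ha
    obtain ⟨v, hv⟩ := ha
    rw [← hv]
    rfl
  set f0 : A →+ ZMod (q ^ 2) := AddMonoidHom.mk' (fun a => iotaMap q (a : ZMod q × G).1) (by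
    rintro a b
    show iotaMap q ((a : ZMod q × G) + (b : ZMod q × G)).1 = _
    rw [hadd]
    show iotaMap q ((a : ZMod q × G).1 + (b : ZMod q × G).1
      + c' (a : ZMod q × G).2 (b : ZMod q × G).2) = _
    rw [hmem_snd _ a.2, hone', add_zero, iotaMap_add]) with hf0
  obtain ⟨F, hF⟩ := baer_extend (q ^ 2) hexpE A f0
  set ψhat : G → ZMod (q ^ 2) := fun g => F ((0 : ZMod q), g) with hψhat
  have hkey : ∀ σ τ : G, ψhat σ + ψhat τ - ψhat (σ * τ) = iotaMap q (c' σ τ) := by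
    intro σ τ
    have h1 : ((0 : ZMod q), σ) + ((0 : ZMod q), τ)
        = e (c' σ τ) + ((0 : ZMod q), σ * τ) := by
      rw [hadd, hadd, he_apply]
      refine Prod.ext ?_ ?_
      · show (0 : ZMod q) + 0 + c' σ τ = c' σ τ + 0 + c' 1 (σ * τ)
        rw [hone']
        ring
      · show σ * τ = 1 * (σ * τ)
        rw [one_mul]
    have h2 : F (e (c' σ τ)) = iotaMap q (c' σ τ) := by
      have h := hF ⟨e (c' σ τ), ⟨c' σ τ, rfl⟩⟩
      rw [h]
      rfl
    calc ψhat σ + ψhat τ - ψhat (σ * τ)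
        = F (((0 : ZMod q), σ) + ((0 : ZMod q), τ)) - F ((0 : ZMod q), σ * τ) := by
          rw [map_add]
      _ = F (e (c' σ τ)) + F ((0 : ZMod q), σ * τ) - F ((0 : ZMod q), σ * τ) := by
          rw [h1, map_add]
      _ = iotaMap q (c' σ τ) := by rw [h2]; ring
  have hψmul : ∀ σ τ : G, piHom q (ψhat (σ * τ)) = piHom q (ψhat σ) + piHom q (ψhat τ) := by
    intro σ τ
    have h := congrArg (piHom q) (hkey σ τ)
    rw [map_sub, map_add, piHom_iotaMap] at h
    linear_combination -h
  refine ⟨MonoidHom.mk' (fun g => Multiplicative.ofAdd (piHom q (ψhat g))) (by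
      intro σ τ
      show Multiplicative.ofAdd (piHom q (ψhat (σ * τ))) = _
      rw [hψmul]
      rfl), ψhat, c', fun _ => k, ?_, ?_, ?_⟩
  · intro g; rfl
  · intro σ τ; exact (hkey σ τ).symm
  · intro σ τ; simp only [hc']; ring
end

section
/- Let q be a prime power, let n be a natural number, and let G = (ℤ/q)^n. For every 2-cocycle c : G × G → ℤ/q (for the trivial action), there exist finitely many group homomorphisms ψ₁, …, ψ_m, ψ'₁, …, ψ'_m : G → ℤ/q, a group homomorphism ψ₀ : G → ℤ/q with a lift ψ̂₀ : G → ℤ/q² (π ∘ ψ̂₀ = ψ₀), and a function f : G → ℤ/q such that c(σ,τ) = Σ_{i=1}^{m} ψᵢ(σ)·ψ'ᵢ(τ) + χ_{ψ₀,ψ̂₀}(σ,τ) + f(σ) + f(τ) − f(στ) for all σ, τ ∈ G. (In cohomological terms: H²(G, ℤ/q) is generated by its decomposable part H²_dec(G) together with the image of the Bockstein homomorphism β_G.) -/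
section Aux
variable (q : ℕ)

def IsCocycleAux {G : Type*} [Add G] (c : G → G → ZMod q) : Prop :=
  ∀ σ τ ρ, c σ τ + c (σ + τ) ρ = c τ ρ + c σ (τ + ρ)

def GoodAux (G : Type*) [AddCommGroup G] (c : G → G → ZMod q) : Prop :=
  ∃ (m : ℕ) (ψ ψ' : Fin m → (G →+ ZMod q)) (ψ₀ : G →+ ZMod q)
    (ψhat₀ : G → ZMod (q ^ 2)) (χ : G → G → ZMod q) (f : G → ZMod q),
    (∀ σ, piHom q (ψhat₀ σ) = ψ₀ σ) ∧
    (∀ σ τ, iotaMap q (χ σ τ) = ψhat₀ σ + ψhat₀ τ - ψhat₀ (σ + τ)) ∧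
    (∀ σ τ, c σ τ = (∑ i, ψ i σ * ψ' i τ) + χ σ τ + f σ + f τ - f (σ + τ))

variable {q}


lemma val_add_carry [NeZero q] (a b : ZMod q) :
    (a + b).val + q * (if q ≤ a.val + b.val then 1 else 0) = a.val + b.val := by
  have h := ZMod.val_add a b
  have ha := ZMod.val_lt a; have hb := ZMod.val_lt b
  split_ifs with h1
  · have h2 : (a.val + b.val) % q = a.val + b.val - q := by
      rw [Nat.mod_eq_sub_mod h1, Nat.mod_eq_of_lt (by omega)]
    omega
  · rw [h, Nat.mod_eq_of_lt (by omega)]; omega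

lemma base_case [NeZero q] (hq2 : 2 ≤ q) (c : ZMod q → ZMod q → ZMod q)
    (hc : ∀ σ τ ρ : ZMod q, c σ τ + c (σ + τ) ρ = c τ ρ + c σ (τ + ρ)) :
    ∃ (ψ₀ : ZMod q →+ ZMod q) (ψhat₀ : ZMod q → ZMod (q ^ 2))
      (χ : ZMod q → ZMod q → ZMod q) (f : ZMod q → ZMod q),
      (∀ σ, piHom q (ψhat₀ σ) = ψ₀ σ) ∧
      (∀ σ τ, iotaMap q (χ σ τ) = ψhat₀ σ + ψhat₀ τ - ψhat₀ (σ + τ)) ∧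
      (∀ σ τ, c σ τ = χ σ τ + f σ + f τ - f (σ + τ)) := by
  haveI : Fact (1 < q) := ⟨hq2⟩
  set c' : ZMod q → ZMod q → ZMod q := fun a b => c a b - c 0 0 with hc'def
  have hc' : ∀ σ τ ρ : ZMod q, c' σ τ + c' (σ + τ) ρ = c' τ ρ + c' σ (τ + ρ) := by
    intro σ τ ρ; simp only [hc'def]; linear_combination hc σ τ ρ
  have hc'0 : ∀ τ, c' 0 τ = 0 := by
    intro τ; have := hc 0 0 τ; simp only [zero_add] at this
    simp only [hc'def]; linear_combination - this
  have hc'0' : ∀ σ, c' σ 0 = 0 := by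
    intro σ; have := hc σ 0 0; simp only [add_zero] at this
    simp only [hc'def]; linear_combination this
  -- the "integration" function
  set fb : ZMod q → ZMod q := fun a => ∑ k ∈ Finset.range a.val, c' 1 (k : ZMod q) with hfbdef
  have hfb0 : fb 0 = 0 := by simp [hfbdef]
  have hfb1 : fb 1 = 0 := by
    simp [hfbdef, ZMod.val_one q]
    exact hc'0' 1
  set S : ZMod q := c' 1 (-1) + fb (-1) with hSdef
  set E : ZMod q → ZMod q → ZMod q := fun a b => if q ≤ a.val + b.val then S else 0 with hEdef
  have hneg1 : ((-1 : ZMod q)) = ((q - 1 : ℕ) : ZMod q) := by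
    have h1 : ((q : ℕ) : ZMod q) = 0 := ZMod.natCast_self q
    rw [Nat.cast_sub (by omega)]
    rw [h1]; ring_nf
  have hvalneg1 : (-1 : ZMod q).val = q - 1 := by
    rw [hneg1, ZMod.val_cast_of_lt (by omega)]
  -- claim1 : the formula for c' 1 b
  have claim1 : ∀ b : ZMod q, c' 1 b = fb (1 + b) - fb b + E 1 b := by
    intro b
    have hvb := ZMod.val_lt b
    rcases lt_or_ge b.val (q - 1) with hb | hb
    · have hval : (1 + b).val = 1 + b.val := by
        rw [ZMod.val_add, ZMod.val_one q, Nat.mod_eq_of_lt (by omega)]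
      have hE : E 1 b = 0 := by
        simp only [hEdef, ZMod.val_one q]
        rw [if_neg (by omega)]
      have hfb : fb (1 + b) = fb b + c' 1 b := by
        simp only [hfbdef, hval]
        rw [add_comm 1 b.val, Finset.sum_range_succ]
        congr 1
        rw [ZMod.natCast_rightInverse b]
      rw [hfb, hE]; ring
    · have hb' : b.val = q - 1 := by omega
      have hbeq : b = -1 := by
        have : b = ((b.val : ℕ) : ZMod q) := (ZMod.natCast_rightInverse b).symm
        rw [this, hb', ← hneg1]
      have h1b : (1 : ZMod q) + b = 0 := by rw [hbeq]; ring
      have hE : E 1 b = S := by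
        simp only [hEdef, ZMod.val_one q]
        rw [if_pos (by omega)]
      rw [h1b, hfb0, hE, hbeq, hSdef]; ring
  -- claim2 : the formula for all a by induction on val
  have claim2 : ∀ k : ℕ, k < q → ∀ b : ZMod q,
      c' (k : ZMod q) b = fb ((k : ZMod q) + b) - fb (k : ZMod q) - fb b + E (k : ZMod q) b := by
    intro k
    induction k with
    | zero =>
      intro _ b
      have hE : E (0 : ZMod q) b = 0 := by
        simp only [hEdef, Nat.cast_zero, ZMod.val_zero]
        rw [if_neg (by have := ZMod.val_lt b; omega)]
      simp [hc'0, hE, hfb0]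
    | succ k ih =>
      intro hk1 b
      have hk : k < q := by omega
      have hvk : (k : ZMod q).val = k := ZMod.val_cast_of_lt hk
      have hvb := ZMod.val_lt b
      have hcast : ((k + 1 : ℕ) : ZMod q) = (k : ZMod q) + 1 := by push_cast; ring
      have hcoc := hc' 1 (k : ZMod q) b
      have h1k : c' 1 (k : ZMod q) = fb (1 + (k : ZMod q)) - fb (k : ZMod q) := by
        have h := claim1 (k : ZMod q)
        have hE : E 1 (k : ZMod q) = 0 := by
          simp only [hEdef, ZMod.val_one q, hvk]
          rw [if_neg (by omega)]
        rw [hE] at h; linear_combination h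
      have hvk1 : ((1 : ZMod q) + (k : ZMod q)).val = k + 1 := by
        rw [add_comm, ← hcast, ZMod.val_cast_of_lt hk1]
      have hvkb : ((k : ZMod q) + b).val = (k + b.val) % q := by
        rw [ZMod.val_add, hvk]
      have EE : E (k : ZMod q) b + E 1 ((k : ZMod q) + b) = E (1 + (k : ZMod q)) b := by
        simp only [hEdef, hvk, hvk1, hvkb, ZMod.val_one q]
        rcases le_or_gt q (k + b.val) with h | h
        · have h2 : (k + b.val) % q = k + b.val - q := by
            rw [Nat.mod_eq_sub_mod h, Nat.mod_eq_of_lt (by omega)]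
          rw [if_pos h, h2, if_neg (by omega), if_pos (by omega)]; ring
        · rw [Nat.mod_eq_of_lt h, if_neg (by omega)]
          rcases le_or_gt q (1 + (k + b.val)) with h3 | h3
          · rw [if_pos h3, if_pos (by omega)]; ring
          · rw [if_neg (by omega), if_neg (by omega)]; ring
      rw [hcast, show (k : ZMod q) + 1 + b = 1 + ((k : ZMod q) + b) from by ring,
        show (k : ZMod q) + 1 = 1 + (k : ZMod q) from by ring]
      linear_combination hcoc - h1k + claim1 ((k : ZMod q) + b) + ih hk b + EE
  have key : ∀ a b : ZMod q, c' a b = fb (a + b) - fb a - fb b + E a b := by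
    intro a b
    have h := claim2 a.val (ZMod.val_lt a) b
    rwa [ZMod.natCast_rightInverse a] at h
  haveI : NeZero (q ^ 2) := ⟨pow_ne_zero 2 (NeZero.ne q)⟩
  refine ⟨AddMonoidHom.mulLeft S, fun x => ((S.val * x.val : ℕ) : ZMod (q ^ 2)), E,
    fun a => c 0 0 - fb a, ?_, ?_, ?_⟩
  · intro x
    rw [map_natCast]
    push_cast
    rw [ZMod.natCast_rightInverse S, ZMod.natCast_rightInverse x]
  · intro a b
    have h := val_add_carry a b
    simp only [hEdef]
    split_ifs at h ⊢ with h1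
    · have hnat : S.val * a.val + S.val * b.val = S.val * (a + b).val + S.val * q := by
        nlinarith [h]
      have hcast2 := congrArg (Nat.cast : ℕ → ZMod (q ^ 2)) hnat
      push_cast at hcast2
      unfold iotaMap
      push_cast
      linear_combination - hcast2
    · have hnat : S.val * a.val + S.val * b.val = S.val * (a + b).val := by nlinarith [h]
      have hcast2 := congrArg (Nat.cast : ℕ → ZMod (q ^ 2)) hnat
      push_cast at hcast2
      unfold iotaMap
      rw [ZMod.val_zero]
      push_cast
      linear_combination - hcast2
  · intro a b
    have h := key a b
    simp only [hc'def] at h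
    linear_combination h

lemma iota_add [NeZero q] (x y : ZMod q) :
    iotaMap q (x + y) = iotaMap q x + iotaMap q y := by
  unfold iotaMap
  have h := val_add_carry x y
  have hq2 : ((q : ZMod (q^2)) * q) = 0 := by
    have h0 : ((q^2 : ℕ) : ZMod (q^2)) = 0 := ZMod.natCast_self _
    push_cast at h0
    linear_combination h0
  have hcast := congrArg (Nat.cast : ℕ → ZMod (q^2)) h
  push_cast at hcast
  split_ifs at hcast with h1
  · linear_combination (q : ZMod (q^2)) * hcast - hq2
  · linear_combination (q : ZMod (q^2)) * hcast

lemma good_comp {G H : Type*} [AddCommGroup G] [AddCommGroup H] (e : G →+ H)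
    (c : H → H → ZMod q) (h : GoodAux q H c) : GoodAux q G (fun σ τ => c (e σ) (e τ)) := by
  obtain ⟨m, ψ, ψ', ψ₀, ψh, χ, f, h1, h2, h3⟩ := h
  refine ⟨m, fun i => (ψ i).comp e, fun i => (ψ' i).comp e, ψ₀.comp e, ψh ∘ e,
    fun σ τ => χ (e σ) (e τ), f ∘ e, fun σ => h1 (e σ), ?_, ?_⟩
  · intro σ τ
    simpa [map_add] using h2 (e σ) (e τ)
  · intro σ τ
    simpa [map_add] using h3 (e σ) (e τ)

lemma good_congr {G : Type*} [AddCommGroup G] {c c' : G → G → ZMod q}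
    (h : ∀ σ τ, c σ τ = c' σ τ) (hg : GoodAux q G c') : GoodAux q G c := by
  obtain ⟨m, ψ, ψ', ψ₀, ψh, χ, f, h1, h2, h3⟩ := hg
  exact ⟨m, ψ, ψ', ψ₀, ψh, χ, f, h1, h2, fun σ τ => (h σ τ).trans (h3 σ τ)⟩

lemma pairing_add {G : Type*} [AddCommGroup G] {c : G → G → ZMod q}
    (hc : ∀ σ τ ρ : G, c σ τ + c (σ + τ) ρ = c τ ρ + c σ (τ + ρ)) (x x' y : G) :
    c (x + x') y - c y (x + x') = (c x y - c y x) + (c x' y - c y x') := by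
  have A := hc x x' y
  have B := hc x y x'
  have C := hc y x x'
  rw [add_comm y x'] at B
  rw [add_comm y x] at C
  linear_combination A - B + C

lemma addfun_eq_mul [NeZero q] {h : ZMod q → ZMod q}
    (hadd : ∀ x y : ZMod q, h (x + y) = h x + h y) (a : ZMod q) : h a = h 1 * a := by
  have h0 : h 0 = 0 := by have := hadd 0 0; simpa using this
  have hn : ∀ n : ℕ, h ((n : ℕ) : ZMod q) = h 1 * ((n : ℕ) : ZMod q) := by
    intro n
    induction n with
    | zero => simpa using h0
    | succ k ih =>
      push_cast
      rw [hadd, ih]; ring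
  calc h a = h ((a.val : ℕ) : ZMod q) := by rw [ZMod.natCast_rightInverse a]
    _ = h 1 * ((a.val : ℕ) : ZMod q) := hn a.val
    _ = h 1 * a := by rw [ZMod.natCast_rightInverse a]

lemma step_case [NeZero q] (hq2 : 2 ≤ q) {B : Type*} [AddCommGroup B]
    (hB : ∀ cB : B → B → ZMod q, IsCocycleAux q cB → GoodAux q B cB)
    (c : (ZMod q × B) → (ZMod q × B) → ZMod q) (hc : IsCocycleAux q c) :
    GoodAux q (ZMod q × B) c := by
  -- the key product decomposition
  have key : ∀ (a a' : ZMod q) (b b' : B), c (a, b) (a', b') =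
      c (a, 0) (a', 0) + c (0, b) (0, b') + (c (0, b) (a', 0) - c (a', 0) (0, b))
      + c (a + a', 0) (0, b + b') - c (a, 0) (0, b) - c (a', 0) (0, b') := by
    intro a a' b b'
    have I1 := hc (a, 0) (0, b) (a', b')
    have I2 := hc (0, b) (a', 0) (0, b')
    have I3 := hc (a', 0) (0, b) (0, b')
    have I4 := hc (a, 0) (a', 0) (0, b + b')
    simp only [Prod.mk_add_mk, add_zero, zero_add] at I1 I2 I3 I4
    linear_combination I1 - I2 + I3 - I4
  -- the component cocycles
  have hcA : IsCocycleAux q (fun x y : ZMod q => c (x, 0) (y, 0)) := by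
    intro x y z
    have := hc (x, (0 : B)) (y, 0) (z, 0)
    simpa [Prod.mk_add_mk] using this
  have hcB : IsCocycleAux q (fun x y : B => c (0, x) (0, y)) := by
    intro x y z
    have := hc ((0 : ZMod q), x) (0, y) (0, z)
    simpa [Prod.mk_add_mk] using this
  -- the pairing g
  set g : B → ZMod q → ZMod q := fun b a => c (0, b) (a, 0) - c (a, 0) (0, b) with hgdef
  have hga : ∀ (b : B) (x y : ZMod q), g b (x + y) = g b x + g b y := by
    intro b x y
    have h := pairing_add hc (x, (0 : B)) (y, 0) (0, b)
    simp only [Prod.mk_add_mk, add_zero] at h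
    simp only [hgdef]
    linear_combination - h
  have hgb : ∀ (b b' : B) (a : ZMod q), g (b + b') a = g b a + g b' a := by
    intro b b' a
    have h := pairing_add hc ((0 : ZMod q), b) (0, b') (a, 0)
    simp only [Prod.mk_add_mk, add_zero] at h
    simp only [hgdef]
    linear_combination h
  have hgmul : ∀ (b : B) (a : ZMod q), g b a = g b 1 * a := fun b a =>
    addfun_eq_mul (hga b) a
  -- data from the components
  obtain ⟨ψ₀A, ψhA, χA, fA, hA1, hA2, hA3⟩ := base_case hq2 _ hcA
  obtain ⟨mB, ψB, ψ'B, ψ₀B, ψhB, χB, fB, hB1, hB2, hB3⟩ := hB _ hcB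
  -- the pairing homomorphisms
  refine ⟨mB + 1,
    Fin.cons ((AddMonoidHom.mk' (fun b => g b 1) (fun b b' => hgb b b' 1)).comp
      (AddMonoidHom.snd (ZMod q) B))
      (fun i => (ψB i).comp (AddMonoidHom.snd (ZMod q) B)),
    Fin.cons ((AddMonoidHom.fst (ZMod q) B))
      (fun i => (ψ'B i).comp (AddMonoidHom.snd (ZMod q) B)),
    ψ₀A.comp (AddMonoidHom.fst (ZMod q) B) + ψ₀B.comp (AddMonoidHom.snd (ZMod q) B),
    fun p => ψhA p.1 + ψhB p.2,
    fun σ τ => χA σ.1 τ.1 + χB σ.2 τ.2,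
    fun p => fA p.1 + fB p.2 - c (p.1, 0) (0, p.2), ?_, ?_, ?_⟩
  · intro σ
    simp [map_add, hA1 σ.1, hB1 σ.2]
  · intro σ τ
    rw [iota_add, hA2 σ.1 τ.1, hB2 σ.2 τ.2]
    simp only [Prod.fst_add, Prod.snd_add]
    ring
  · intro σ τ
    rw [Fin.sum_univ_succ]
    simp only [Fin.cons_zero, Fin.cons_succ, AddMonoidHom.coe_comp, Function.comp_apply,
      AddMonoidHom.coe_snd, AddMonoidHom.coe_fst, AddMonoidHom.mk'_apply,
      Prod.fst_add, Prod.snd_add]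
    have hk := key σ.1 τ.1 σ.2 τ.2
    have hA := hA3 σ.1 τ.1
    have hBB := hB3 σ.2 τ.2
    have hg := hgmul σ.2 τ.1
    calc c σ τ = c (σ.1, σ.2) (τ.1, τ.2) := by rfl
      _ = _ := by
        rw [hk]
        simp only at hA hBB
        linear_combination hA + hBB + hg

lemma good_zero [NeZero q] (c : (Fin 0 → ZMod q) → (Fin 0 → ZMod q) → ZMod q) :
    GoodAux q (Fin 0 → ZMod q) c := by
  refine ⟨0, fun i => 0, fun i => 0, 0, fun _ => 0, fun _ _ => 0, fun _ => c 0 0, ?_, ?_, ?_⟩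
  · intro σ; simp
  · intro σ τ
    haveI : NeZero (q ^ 2) := ⟨pow_ne_zero 2 (NeZero.ne q)⟩
    simp [iotaMap]
  · intro σ τ
    have hσ : σ = 0 := Subsingleton.elim _ _
    have hτ : τ = 0 := Subsingleton.elim _ _
    subst hσ; subst hτ
    simp

def piSuccAddEquiv (q n : ℕ) : (Fin (n + 1) → ZMod q) ≃+ (ZMod q × (Fin n → ZMod q)) where
  toFun σ := (σ 0, fun i => σ i.succ)
  invFun p := Fin.cons p.1 p.2
  left_inv σ := by
    funext i
    refine Fin.cases ?_ ?_ i <;> simp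
  right_inv p := by simp
  map_add' σ τ := rfl

lemma main_aux [NeZero q] (hq2 : 2 ≤ q) :
    ∀ (n : ℕ) (c : (Fin n → ZMod q) → (Fin n → ZMod q) → ZMod q),
      IsCocycleAux q c → GoodAux q (Fin n → ZMod q) c := by
  intro n
  induction n with
  | zero => intro c _; exact good_zero c
  | succ n ih =>
    intro c hc
    set e := piSuccAddEquiv q n with hedef
    have hcP : IsCocycleAux q (fun x y : ZMod q × (Fin n → ZMod q) => c (e.symm x) (e.symm y)) := by
      intro x y z
      have := hc (e.symm x) (e.symm y) (e.symm z)
      simpa [← map_add] using this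
    have hP := step_case hq2 (fun cB hcB => ih cB hcB) _ hcP
    have := good_comp e.toAddMonoidHom _ hP
    refine good_congr (fun σ τ => ?_) this
    simp

end Aux

/-- Let `q` be a prime power and `G = (ℤ/q)ⁿ`.  Every 2-cocycle `c : G × G → ℤ/q` is,
modulo a 2-coboundary, a sum of cup-product cocycles and a Bockstein 2-cocycle:
`H²(G, ℤ/q)` is generated by its decomposable part together with the image of the
Bockstein homomorphism. -/
theorem H2_generated_by_dec_and_bockstein (p d q : ℕ) (hp : p.Prime) (hd : 0 < d)
    (hq : q = p ^ d) (n : ℕ)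
    (c : (Fin n → ZMod q) → (Fin n → ZMod q) → ZMod q)
    (hcocycle : ∀ σ τ ρ : Fin n → ZMod q, c σ τ + c (σ + τ) ρ = c τ ρ + c σ (τ + ρ)) :
    ∃ (m : ℕ) (ψ ψ' : Fin m → ((Fin n → ZMod q) →+ ZMod q))
      (ψ₀ : (Fin n → ZMod q) →+ ZMod q) (ψhat₀ : (Fin n → ZMod q) → ZMod (q ^ 2))
      (χ : (Fin n → ZMod q) → (Fin n → ZMod q) → ZMod q)
      (f : (Fin n → ZMod q) → ZMod q),
      (∀ σ : Fin n → ZMod q, piHom q (ψhat₀ σ) = ψ₀ σ) ∧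
      (∀ σ τ : Fin n → ZMod q, iotaMap q (χ σ τ) = ψhat₀ σ + ψhat₀ τ - ψhat₀ (σ + τ)) ∧
      (∀ σ τ : Fin n → ZMod q,
        c σ τ = (∑ i, ψ i σ * ψ' i τ) + χ σ τ + f σ + f τ - f (σ + τ)) := by
  have hq2 : 2 ≤ q := by
    rw [hq]
    exact Nat.one_lt_pow hd.ne' hp.one_lt
  haveI : NeZero q := ⟨by omega⟩
  exact main_aux hq2 n c hcocycle
end
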